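/- Let m = 3 and let π be a probability density on ℝ with positive values everywhere, used as the common utility distribution shape. For independent utilities u_i ~ π(· - θ_i) with θ₁ > 0 and θ₂ = θ₃ = 0, write p_{σ} for the probability of each of the six rankings. Then p₁₂₃ = p₁₃₂, p₂₃₁ = p₃₂₁, p₂₁₃ = p₃₁₂, but p₁₃₂ ≠ p₂₃₁; consequently p₁₃₂/p₃₁₂ ≠ p₂₃₁/p₂₁₃. -/

import Mathlib

open MeasureTheory

theorem three_alternatives_ranking_probabilities
    (π : ℝ → ℝ)
    (hπ_pos : ∀ x, 0 < π x) (hπ_cont : Continuous π)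
    (hπ_int : ∫ x : ℝ, π x = 1)
    (t : ℝ) (ht : 0 < t)
    -- Pr(u_i > u_j > u_k) where the top, middle, bottom alternatives have
    -- mean shifts A, B, C respectively:
    (p : ℝ → ℝ → ℝ → ℝ)
    (hp : ∀ A B C : ℝ, p A B C =
      ∫ z : ℝ, π (z - C) * (∫ y in Set.Ioi z, π (y - B) * (∫ x in Set.Ioi y, π (x - A))))
    -- the six ranking probabilities with θ₁ = t, θ₂ = θ₃ = 0:
    (p123 p132 p213 p231 p312 p321 : ℝ)
    (h123 : p123 = p t 0 0) (h132 : p132 = p t 0 0)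
    (h213 : p213 = p 0 t 0) (h312 : p312 = p 0 t 0)
    (h231 : p231 = p 0 0 t) (h321 : p321 = p 0 0 t) :
    p123 = p132 ∧ p231 = p321 ∧ p213 = p312 ∧ p132 ≠ p231 ∧
      p132 / p312 ≠ p231 / p213 := by
  have hπ_meas : Measurable π := hπ_cont.measurable
  have hπ_nonneg : ∀ x, 0 ≤ π x := fun x => (hπ_pos x).le
  have hπ_integrable : Integrable π := by
    by_contra h
    rw [integral_undef h] at hπ_int
    norm_num at hπ_int
  set F : ℝ → ℝ := fun w => ∫ x in Set.Ioi w, π x with hFdef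
  have hF_nonneg : ∀ w, 0 ≤ F w := fun w =>
    setIntegral_nonneg measurableSet_Ioi (fun x _ => hπ_nonneg x)
  have hF_pos : ∀ w, 0 < F w := by
    intro w
    rw [hFdef]
    rw [setIntegral_pos_iff_support_of_nonneg_ae
      (ae_of_all _ hπ_nonneg) hπ_integrable.integrableOn]
    have : Function.support π = Set.univ := by
      ext x; simp [Function.support, (hπ_pos x).ne']
    rw [this, Set.univ_inter, Real.volume_Ioi]
    simp
  have hF_le_one : ∀ w, F w ≤ 1 := by
    intro w
    calc F w ≤ ∫ x, π x := setIntegral_le_integral hπ_integrable (ae_of_all _ hπ_nonneg)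
    _ = 1 := hπ_int
  have hF_anti : Antitone F := by
    intro a b hab
    exact setIntegral_mono_set hπ_integrable.integrableOn
      (ae_of_all _ hπ_nonneg) (ae_of_all _ (Set.Ioi_subset_Ioi hab))
  have hF_meas : Measurable F := hF_anti.measurable
  -- shift lemma for integrals over Ioi
  have hshift : ∀ (a y : ℝ), (∫ x in Set.Ioi y, π (x - a)) = F (y - a) := by
    intro a y
    have hr : F (y - a) = ∫ x, (Set.Ioi (y - a)).indicator π x :=
      (integral_indicator measurableSet_Ioi).symm
    rw [hr, ← integral_indicator measurableSet_Ioi]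
    have : (Set.Ioi y).indicator (fun x => π (x - a)) =
        fun x => (Set.Ioi (y - a)).indicator π (x - a) := by
      ext x
      by_cases h : x ∈ Set.Ioi y
      · rw [Set.indicator_of_mem h, Set.indicator_of_mem (by simpa using sub_lt_sub_right h a)]
      · rw [Set.indicator_of_notMem h, Set.indicator_of_notMem (by
          simp only [Set.mem_Ioi, not_lt] at h ⊢; exact sub_le_sub_right h a)]
    rw [this]
    exact integral_sub_right_eq_self ((Set.Ioi (y - a)).indicator π) a
  -- generic integrability
  have key : ∀ (a : ℝ) (g : ℝ → ℝ), Measurable g → (∀ x, 0 ≤ g x) → (∀ x, g x ≤ 1) →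
      Integrable (fun y => π (y - a) * g y) := by
    intro a g hg hg0 hg1
    have hπa : Integrable (fun y => π (y - a)) := hπ_integrable.comp_sub_right a
    refine hπa.mono ((((hπ_meas.comp (measurable_sub_const a))).mul hg).aestronglyMeasurable)
      (ae_of_all _ fun x => ?_)
    rw [Real.norm_eq_abs, Real.norm_eq_abs, abs_of_nonneg (hπ_nonneg _),
      abs_of_nonneg (mul_nonneg (hπ_nonneg _) (hg0 x))]
    calc π (x - a) * g x ≤ π (x - a) * 1 :=
      mul_le_mul_of_nonneg_left (hg1 x) (hπ_nonneg _)
    _ = π (x - a) := mul_one _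
  have key0 : ∀ (g : ℝ → ℝ), Measurable g → (∀ x, 0 ≤ g x) → (∀ x, g x ≤ 1) →
      Integrable (fun y => π y * g y) := by
    intro g hg hg0 hg1
    simpa using key 0 g hg hg0 hg1
  -- the three inner functions
  set G : ℝ → ℝ := fun z => ∫ y in Set.Ioi z, π y * F (y - t) with hGdef
  set H : ℝ → ℝ := fun z => ∫ y in Set.Ioi z, π y * F y with hHdef
  set K : ℝ → ℝ := fun z => ∫ y in Set.Ioi z, π (y - t) * F y with hKdef
  have hGint : Integrable (fun y => π y * F (y - t)) :=
    key0 _ (hF_meas.comp (measurable_sub_const t)) (fun x => hF_nonneg _) (fun x => hF_le_one _)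
  have hHint : Integrable (fun y => π y * F y) :=
    key0 _ hF_meas (fun x => hF_nonneg _) (fun x => hF_le_one _)
  have hKint : Integrable (fun y => π (y - t) * F y) :=
    key t _ hF_meas (fun x => hF_nonneg _) (fun x => hF_le_one _)
  -- bounds & antitonicity for G H K
  have inner_props : ∀ (f : ℝ → ℝ), (∀ x, 0 ≤ f x) → (∀ x, f x ≤ 1) →
      Integrable (fun y => π y * f y) →
      (∀ z, 0 ≤ ∫ y in Set.Ioi z, π y * f y) ∧ (∀ z, (∫ y in Set.Ioi z, π y * f y) ≤ 1) ∧
        Antitone (fun z => ∫ y in Set.Ioi z, π y * f y) := by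
    intro f hf0 hf1 hfi
    have hnn : ∀ y, 0 ≤ π y * f y := fun y => mul_nonneg (hπ_nonneg y) (hf0 y)
    refine ⟨fun z => setIntegral_nonneg measurableSet_Ioi (fun x _ => hnn x), fun z => ?_, ?_⟩
    · calc (∫ y in Set.Ioi z, π y * f y) ≤ ∫ y, π y * f y :=
        setIntegral_le_integral hfi (ae_of_all _ hnn)
      _ ≤ ∫ y, π y := integral_mono hfi hπ_integrable (fun y => by
          calc π y * f y ≤ π y * 1 := mul_le_mul_of_nonneg_left (hf1 y) (hπ_nonneg y)
          _ = π y := mul_one _)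
      _ = 1 := hπ_int
    · intro a b hab
      exact setIntegral_mono_set hfi.integrableOn (ae_of_all _ hnn)
        (ae_of_all _ (Set.Ioi_subset_Ioi hab))
  obtain ⟨hG0, hG1, hGanti⟩ := inner_props _ (fun x => hF_nonneg _) (fun x => hF_le_one _) hGint
  obtain ⟨hH0, hH1, hHanti⟩ := inner_props _ (fun x => hF_nonneg _) (fun x => hF_le_one _) hHint
  -- expressions for the p's
  have hpe1 : p t 0 0 = ∫ z, π z * G z := by
    rw [hp t 0 0]
    simp only [sub_zero, hshift, hGdef]
  have hpe2 : p 0 0 t = ∫ z, π z * H (z + t) := by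
    rw [hp 0 0 t]
    simp only [sub_zero, hshift, hHdef]
    exact (integral_add_right_eq_self (fun z => π (z - t) * ∫ y in Set.Ioi z, π y * F y) t).symm
      |>.trans (by simp)
  have hpe3 : p 0 t 0 = ∫ z, π z * K z := by
    rw [hp 0 t 0]
    simp only [sub_zero, hshift, hKdef]
    rfl
  -- pointwise strict inequality  H (z+t) < G z
  have hpoint : ∀ z, H (z + t) < G z := by
    intro z
    have hsplit : G z = (∫ y in Set.Ioc z (z + t), π y * F (y - t)) +
        ∫ y in Set.Ioi (z + t), π y * F (y - t) := by
      rw [hGdef]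
      rw [← setIntegral_union (Set.Ioc_disjoint_Ioi le_rfl) measurableSet_Ioi
        hGint.integrableOn hGint.integrableOn,
        Set.Ioc_union_Ioi_eq_Ioi (by linarith)]
    have h1 : 0 < ∫ y in Set.Ioc z (z + t), π y * F (y - t) := by
      rw [setIntegral_pos_iff_support_of_nonneg_ae
        (ae_of_all _ fun y => mul_nonneg (hπ_nonneg y) (hF_nonneg _)) hGint.integrableOn]
      have : Function.support (fun y => π y * F (y - t)) = Set.univ := by
        ext x
        simp only [Function.support, Set.mem_setOf_eq, Set.mem_univ, iff_true, ne_eq,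
          mul_eq_zero, not_or]
        exact ⟨(hπ_pos x).ne', (hF_pos (x - t)).ne'⟩
      rw [this, Set.univ_inter, Real.volume_Ioc]
      simp [ht]
    have h2 : H (z + t) ≤ ∫ y in Set.Ioi (z + t), π y * F (y - t) := by
      rw [hHdef]
      refine setIntegral_mono_on hHint.integrableOn hGint.integrableOn measurableSet_Ioi
        (fun y _ => ?_)
      exact mul_le_mul_of_nonneg_left (hF_anti (by linarith)) (hπ_nonneg y)
    linarith
  -- integrability of the outer integrands
  have hO1 : Integrable (fun z => π z * G z) := key0 G hGanti.measurable hG0 hG1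
  have hO2 : Integrable (fun z => π z * H (z + t)) :=
    key0 _ (hHanti.measurable.comp (measurable_add_const t)) (fun z => hH0 _) (fun z => hH1 _)
  -- strict inequality of the outer integrals
  have hmain : p 0 0 t < p t 0 0 := by
    rw [hpe1, hpe2]
    have hdiff : 0 < ∫ z, (π z * G z - π z * H (z + t)) := by
      rw [integral_pos_iff_support_of_nonneg]
      · have : Function.support (fun z => π z * G z - π z * H (z + t)) = Set.univ := by
          ext x
          have : 0 < π x * G x - π x * H (x + t) := by
            rw [← mul_sub]
            exact mul_pos (hπ_pos x) (by linarith [hpoint x])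
          simp [Function.support, this.ne']
        rw [this]
        simp
      · intro x
        have : 0 < π x * G x - π x * H (x + t) := by
          rw [← mul_sub]
          exact mul_pos (hπ_pos x) (by linarith [hpoint x])
        simpa using this.le
      · exact hO1.sub hO2
    rw [integral_sub hO1 hO2] at hdiff
    linarith
  have hd_pos : 0 < p 0 t 0 := by
    rw [hpe3]
    have hK0 : ∀ z, 0 < K z := by
      intro z
      rw [hKdef]
      rw [setIntegral_pos_iff_support_of_nonneg_ae
        (ae_of_all _ fun y => mul_nonneg (hπ_nonneg _) (hF_nonneg _)) hKint.integrableOn]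
      have : Function.support (fun y => π (y - t) * F y) = Set.univ := by
        ext x
        simp only [Function.support, Set.mem_setOf_eq, Set.mem_univ, iff_true, ne_eq,
          mul_eq_zero, not_or]
        exact ⟨(hπ_pos (x - t)).ne', (hF_pos x).ne'⟩
      rw [this, Set.univ_inter, Real.volume_Ioi]
      simp
    have hKanti : Antitone K := by
      intro a b hab
      exact setIntegral_mono_set hKint.integrableOn
        (ae_of_all _ fun y => mul_nonneg (hπ_nonneg _) (hF_nonneg _))
        (ae_of_all _ (Set.Ioi_subset_Ioi hab))
    rw [integral_pos_iff_support_of_nonneg]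
    · have : Function.support (fun z => π z * K z) = Set.univ := by
        ext x
        simp only [Function.support, Set.mem_setOf_eq, Set.mem_univ, iff_true, ne_eq,
          mul_eq_zero, not_or]
        exact ⟨(hπ_pos x).ne', (hK0 x).ne'⟩
      rw [this]; simp
    · exact fun x => mul_nonneg (hπ_nonneg x) (hK0 x).le
    · have hK1 : ∀ z, K z ≤ 1 := by
        intro z
        have h1 : K z ≤ ∫ y, π (y - t) * F y := by
          rw [hKdef]
          exact setIntegral_le_integral hKint
            (ae_of_all _ fun y => mul_nonneg (hπ_nonneg _) (hF_nonneg _))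
        have h2 : (∫ y, π (y - t) * F y) ≤ ∫ y, π (y - t) :=
          integral_mono hKint (hπ_integrable.comp_sub_right t) (fun y => by
            calc π (y - t) * F y ≤ π (y - t) * 1 :=
              mul_le_mul_of_nonneg_left (hF_le_one y) (hπ_nonneg _)
            _ = π (y - t) := mul_one _)
        have h3 : (∫ y : ℝ, π (y - t)) = 1 := by
          rw [integral_sub_right_eq_self π t]; exact hπ_int
        linarith
      exact key0 K hKanti.measurable (fun z => (hK0 z).le) hK1
  refine ⟨by rw [h123, h132], by rw [h231, h321], by rw [h213, h312], ?_, ?_⟩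
  · rw [h132, h231]; exact fun h => absurd h (by linarith)
  · rw [h132, h231, h312, h213]
    intro h
    rw [div_eq_div_iff (by linarith) (by linarith)] at h
    have := mul_right_cancel₀ (by linarith : p 0 t 0 ≠ 0) h
    linarith
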